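/- Let N_1 < N_2 be integers and suppose E ⊂ [N_1, N_2] is an almost phaseless sampling set for V_m|_{[N_1,N_2]}. Then #E ≥ N_2 − N_1 + m + 1. -/

import Mathlib

open MeasureTheory

/-- The degree-`m` B-spline: `(m+1)`-fold convolution of the indicator of `[0,1]`. -/
noncomputable def bspline : ℕ → ℝ → ℝ
  | 0 => Set.indicator (Set.Icc (0 : ℝ) 1) (fun _ => 1)
  | m + 1 => fun x => ∫ t in (0 : ℝ)..1, bspline m (x - t)

/-- The spline `Σ_{n=N₁-m}^{N₂-1} cₙ φ_m(x-n)`, with coefficients indexed by the basis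
index set of `V_m|_{[N₁,N₂]}`. -/
noncomputable def splineFun (m : ℕ) (N₁ N₂ : ℤ) (c : ℤ → ℝ) (x : ℝ) : ℝ :=
  ∑ n ∈ Finset.Icc (N₁ - m) (N₂ - 1), c n * bspline m (x - n)

/-- `E` is an almost phaseless sampling set for `V_m|_{[N₁,N₂]}`: all functions with
coefficient vector outside a finite union of proper subspaces of the coefficient space
are determined up to a sign on `[N₁,N₂]` by their unsigned samples on `E`. -/
def IsAlmostPhaselessSamplingSet (m : ℕ) (N₁ N₂ : ℤ) (E : Finset ℝ) : Prop :=
  ∃ S : Finset (Submodule ℝ ({n // n ∈ Finset.Icc (N₁ - (m : ℤ)) (N₂ - 1)} → ℝ)),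
    (∀ W ∈ S, W ≠ ⊤) ∧
    ∀ c : ℤ → ℝ,
      (∀ W ∈ S, (fun n : {n // n ∈ Finset.Icc (N₁ - (m : ℤ)) (N₂ - 1)} => c n) ∉ W) →
      ∀ c' : ℤ → ℝ,
        (∀ x ∈ E, |splineFun m N₁ N₂ c x| = |splineFun m N₁ N₂ c' x|) →
        (∀ x ∈ Set.Icc (N₁ : ℝ) N₂, splineFun m N₁ N₂ c' x = splineFun m N₁ N₂ c x) ∨
        (∀ x ∈ Set.Icc (N₁ : ℝ) N₂, splineFun m N₁ N₂ c' x = -splineFun m N₁ N₂ c x)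

lemma bspline_succ (m : ℕ) (x : ℝ) :
    bspline (m + 1) x = ∫ s in (x - 1)..x, bspline m s := by
  show (∫ t in (0:ℝ)..1, bspline m (x - t)) = _
  rw [intervalIntegral.integral_comp_sub_left (bspline m) x]
  norm_num

lemma bspline_nonneg (m : ℕ) (x : ℝ) : 0 ≤ bspline m x := by
  induction m generalizing x with
  | zero => unfold bspline; exact Set.indicator_nonneg (fun _ _ => zero_le_one) x
  | succ m ih =>
    show 0 ≤ ∫ t in (0:ℝ)..1, bspline m (x - t)
    exact intervalIntegral.integral_nonneg zero_le_one (fun u _ => ih _)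

lemma bspline_zero_of_neg (m : ℕ) {x : ℝ} (hx : x < 0) : bspline m x = 0 := by
  induction m generalizing x with
  | zero =>
    unfold bspline
    exact Set.indicator_of_notMem (by simp [Set.mem_Icc]; intro h; linarith) _
  | succ m ih =>
    show (∫ t in (0:ℝ)..1, bspline m (x - t)) = 0
    rw [intervalIntegral.integral_congr (g := fun _ => (0:ℝ))
      (fun t ht => by
        rw [Set.uIcc_of_le zero_le_one] at ht
        exact ih (by linarith [ht.1]))]
    simp

lemma bspline_zero_of_gt (m : ℕ) {x : ℝ} (hx : (m : ℝ) + 1 < x) : bspline m x = 0 := by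
  induction m generalizing x with
  | zero =>
    unfold bspline
    exact Set.indicator_of_notMem (by simp [Set.mem_Icc]; intro h; norm_num at hx; linarith) _
  | succ m ih =>
    show (∫ t in (0:ℝ)..1, bspline m (x - t)) = 0
    rw [intervalIntegral.integral_congr (g := fun _ => (0:ℝ))
      (fun t ht => by
        rw [Set.uIcc_of_le zero_le_one] at ht
        refine ih ?_
        push_cast at hx ⊢
        linarith [ht.2])]
    simp

lemma bspline_meas_int (m : ℕ) :
    Measurable (bspline m) ∧ ∀ a b : ℝ, IntervalIntegrable (bspline m) volume a b := by
  induction m with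
  | zero =>
    have hmeas : Measurable (bspline 0) := by
      unfold bspline
      exact (measurable_const (a := (1:ℝ))).indicator measurableSet_Icc
    refine ⟨hmeas, fun a b => ?_⟩
    rw [intervalIntegrable_iff]
    have hfin : volume (Set.uIoc a b) < ⊤ := measure_Ioc_lt_top
    refine Integrable.mono' ((integrableOn_const_iff (C := (1:ℝ))).2 (Or.inr hfin))
      (hmeas.aestronglyMeasurable.restrict) ?_
    refine Filter.Eventually.of_forall (fun x => ?_)
    rw [Real.norm_eq_abs, abs_of_nonneg (bspline_nonneg 0 x)]
    unfold bspline
    classical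
    rw [Set.indicator_apply]
    split <;> norm_num
  | succ m ih =>
    have hcont : Continuous (bspline (m + 1)) := by
      have hG : Continuous (fun y : ℝ => ∫ s in (0:ℝ)..y, bspline m s) :=
        intervalIntegral.continuous_primitive (fun a b => ih.2 a b) 0
      have : Continuous (fun x : ℝ => (∫ s in (0:ℝ)..x, bspline m s)
          - ∫ s in (0:ℝ)..(x-1), bspline m s) := hG.sub (hG.comp (continuous_id.sub continuous_const))
      refine this.congr (fun x => ?_)
      rw [bspline_succ, ← intervalIntegral.integral_interval_sub_left (ih.2 0 x) (ih.2 0 (x-1))]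
    exact ⟨hcont.measurable, fun a b => hcont.intervalIntegrable a b⟩

lemma bspline_continuous (m : ℕ) : Continuous (bspline (m + 1)) := by
  have hG : Continuous (fun y : ℝ => ∫ s in (0:ℝ)..y, bspline m s) :=
    intervalIntegral.continuous_primitive (fun a b => (bspline_meas_int m).2 a b) 0
  have : Continuous (fun x : ℝ => (∫ s in (0:ℝ)..x, bspline m s)
      - ∫ s in (0:ℝ)..(x-1), bspline m s) := hG.sub (hG.comp (continuous_id.sub continuous_const))
  refine this.congr (fun x => ?_)
  rw [bspline_succ, ← intervalIntegral.integral_interval_sub_left ((bspline_meas_int m).2 0 x)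
    ((bspline_meas_int m).2 0 (x-1))]

lemma bspline_le_one (m : ℕ) (x : ℝ) : bspline m x ≤ 1 := by
  cases m with
  | zero =>
    unfold bspline; classical
    rw [Set.indicator_apply]; split <;> norm_num
  | succ m =>
    rw [bspline_succ]
    calc (∫ s in (x-1)..x, bspline m s) ≤ ∫ _ in (x-1)..x, (1:ℝ) := by
          refine intervalIntegral.integral_mono_on (by linarith) ((bspline_meas_int m).2 _ _)
            (intervalIntegrable_const) (fun u _ => bspline_le_one m u)
      _ = 1 := by simp

lemma bspline_eq_pow (m : ℕ) {x : ℝ} (hx : x ∈ Set.Icc (0:ℝ) 1) :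
    bspline m x = x ^ m / Nat.factorial m := by
  induction m generalizing x with
  | zero => unfold bspline; simp [Set.indicator_of_mem hx]
  | succ m ih =>
    rw [bspline_succ]
    have h1 : (∫ s in (x-1)..(0:ℝ), bspline m s) = 0 := by
      have h0 : ∀ᵐ s : ℝ, s ≠ (0:ℝ) := by
        rw [MeasureTheory.ae_iff]
        simpa using measure_singleton (0:ℝ)
      have : (∫ s in (x-1)..(0:ℝ), bspline m s) = ∫ _ in (x-1)..(0:ℝ), (0:ℝ) := by
        refine intervalIntegral.integral_congr_ae ?_
        filter_upwards [h0] with s hs hmem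
        rw [Set.uIoc_of_le (by linarith [hx.2])] at hmem
        exact bspline_zero_of_neg m (lt_of_le_of_ne hmem.2 hs)
      simpa using this
    have h2 : (∫ s in (0:ℝ)..x, bspline m s) = ∫ s in (0:ℝ)..x, s ^ m / Nat.factorial m := by
      refine intervalIntegral.integral_congr (fun s hs => ?_)
      rw [Set.uIcc_of_le hx.1] at hs
      exact ih ⟨hs.1, hs.2.trans hx.2⟩
    rw [← intervalIntegral.integral_add_adjacent_intervals ((bspline_meas_int m).2 (x-1) 0)
      ((bspline_meas_int m).2 0 x), h1, h2, zero_add]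
    rw [intervalIntegral.integral_div, integral_pow]
    rw [Nat.factorial_succ]
    have h3 : ((m:ℝ)+1) ≠ 0 := by positivity
    have h4 : ((Nat.factorial m : ℝ)) ≠ 0 := by positivity
    push_cast
    field_simp
    simp

lemma bspline_continuousAt (m : ℕ) {x : ℝ} (hx : ∀ k : ℤ, x ≠ k) :
    ContinuousAt (bspline m) x := by
  cases m with
  | succ m => exact (bspline_continuous m).continuousAt
  | zero =>
    have h0 : x ≠ 0 := by simpa using hx 0
    have h1 : x ≠ 1 := by simpa using hx 1
    rcases lt_trichotomy x 0 with h | h | h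
    · have heq : Set.EqOn (bspline 0) (fun _ => (0:ℝ)) (Set.Iio (0:ℝ)) :=
        fun y hy => bspline_zero_of_neg 0 hy
      exact (continuousAt_const).congr ((heq.eventuallyEq_of_mem (Iio_mem_nhds h)).symm)
    · exact absurd h h0
    rcases lt_trichotomy x 1 with h2 | h2 | h2
    · have heq : Set.EqOn (bspline 0) (fun _ => (1:ℝ)) (Set.Ioo (0:ℝ) 1) := by
        intro y hy
        show Set.indicator _ _ _ = _
        rw [Set.indicator_of_mem (Set.mem_Icc.2 ⟨hy.1.le, hy.2.le⟩)]
      exact (continuousAt_const).congr ((heq.eventuallyEq_of_mem (Ioo_mem_nhds h h2)).symm)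
    · exact absurd h2 h1
    · have heq : Set.EqOn (bspline 0) (fun _ => (0:ℝ)) (Set.Ioi (1:ℝ)) := by
        intro y hy
        show Set.indicator _ _ _ = _
        exact Set.indicator_of_notMem
          (by simp only [Set.mem_Icc, not_and, not_le]; intro _; exact Set.mem_Ioi.1 hy) _
      exact (continuousAt_const).congr ((heq.eventuallyEq_of_mem (Ioi_mem_nhds h2)).symm)

lemma bspline_hasDerivAt (m : ℕ) {x : ℝ} (hx : ∀ k : ℤ, x ≠ k) :
    HasDerivAt (bspline (m + 1)) (bspline m x - bspline m (x - 1)) x := by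
  have hsm : StronglyMeasurable (bspline m) := (bspline_meas_int m).1.stronglyMeasurable
  have hx1 : ∀ k : ℤ, x - 1 ≠ k := fun k h => hx (k + 1) (by push_cast; linarith)
  have hG : ∀ y : ℝ, (∀ k : ℤ, y ≠ k) →
      HasDerivAt (fun u : ℝ => ∫ s in (0:ℝ)..u, bspline m s) (bspline m y) y := by
    intro y hy
    exact intervalIntegral.integral_hasDerivAt_right ((bspline_meas_int m).2 0 y)
      ⟨Set.univ, Filter.univ_mem, hsm.aestronglyMeasurable.restrict⟩ (bspline_continuousAt m hy)
  have h1 := hG x hx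
  have h2 := ((hG (x-1) hx1).comp x ((hasDerivAt_id x).sub_const 1))
  simp only [mul_one] at h2
  have h3 := h1.sub h2
  refine h3.congr_of_eventuallyEq (Filter.Eventually.of_forall (fun u => ?_))
  rw [bspline_succ, ← intervalIntegral.integral_interval_sub_left ((bspline_meas_int m).2 0 u)
    ((bspline_meas_int m).2 0 (u-1))]
  simp [Function.comp]


lemma exists_pt {a b : ℝ} (h : a < b) (F : Finset ℝ) : ∃ x, x ∈ Set.Ioo a b ∧ x ∉ F := by
  by_contra hc
  push_neg at hc
  exact Set.Ioo_infinite h (F.finite_toSet.subset (fun x hx => hc x hx))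

lemma spline_indep_aux (m : ℕ) : ∀ A B : ℤ, A < B → ∀ F : Finset ℝ, ∀ c : ℤ → ℝ,
    (∀ k, k ∉ Finset.Icc (A - (m:ℤ)) (B-1) → c k = 0) →
    (∀ x ∈ Set.Icc (A:ℝ) B \ (F:Set ℝ), splineFun m A B c x = 0) →
    ∀ n, c n = 0 := by
  induction m with
  | zero =>
    intro A B hAB F c hsupp hvan n
    by_cases hn : n ∈ Finset.Icc (A - ((0:ℕ):ℤ)) (B-1)
    swap
    · exact hsupp n hn
    rw [Finset.mem_Icc] at hn
    obtain ⟨x, hx, hxF⟩ := exists_pt (show (n:ℝ) < (n:ℝ) + 1 by linarith) F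
    have hxI : x ∈ Set.Icc (A:ℝ) B \ (F:Set ℝ) := by
      refine ⟨⟨?_, ?_⟩, hxF⟩
      · have : (A:ℝ) ≤ n := by exact_mod_cast (by omega : A ≤ n)
        linarith [hx.1]
      · have : (n:ℝ) + 1 ≤ B := by exact_mod_cast (by omega : n + 1 ≤ B)
        linarith [hx.2]
    have h0 := hvan x hxI
    unfold splineFun at h0
    rw [Finset.sum_eq_single n] at h0
    · have h1 : bspline 0 (x - n) = 1 := by
        unfold bspline
        rw [Set.indicator_of_mem (Set.mem_Icc.2 ⟨by linarith [hx.1], by linarith [hx.2]⟩)]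
      rw [h1, mul_one] at h0
      exact h0
    · intro k hk hkn
      rw [Finset.mem_Icc] at hk
      have h1 : bspline 0 (x - k) = 0 := by
        unfold bspline
        refine Set.indicator_of_notMem ?_ _
        rw [Set.mem_Icc]
        push_neg
        rcases lt_or_gt_of_ne hkn with h | h
        · intro _
          have : (k:ℝ) + 1 ≤ n := by exact_mod_cast (by omega : k + 1 ≤ n)
          linarith [hx.1]
        · intro habs
          have : (n:ℝ) + 1 ≤ k := by exact_mod_cast (by omega : n + 1 ≤ k)
          linarith [hx.2]
      rw [h1, mul_zero]
    · intro habs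
      exact absurd (Finset.mem_Icc.2 (by omega)) habs
  | succ m ih =>
    intro A B hAB F c hsupp hvan
    have hIcc : Finset.Icc (A - ((m+1:ℕ):ℤ)) (B-1) = Finset.Icc (A - (m:ℤ) - 1) (B-1) := by
      congr 1
      push_cast
      ring
    set J := Finset.Icc (A - (m:ℤ) - 1) (B-1) with hJ
    set I := Finset.Icc (A - (m:ℤ) - 1) B with hI
    have hsupp' : ∀ k, k ∉ J → c k = 0 := by
      intro k hk
      exact hsupp k (by rwa [hIcc])
    set d : ℤ → ℝ := fun k => if k ∈ Finset.Icc (A - (m:ℤ)) (B-1) then c k - c (k-1) else 0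
      with hd
    have hdsupp : ∀ k, k ∉ Finset.Icc (A - (m:ℤ)) (B-1) → d k = 0 := fun k hk => if_neg hk
    set F' : Finset ℝ := F ∪ (Finset.Icc A B).image (fun k : ℤ => (k:ℝ)) with hF'
    have hder : ∀ x ∈ Set.Icc (A:ℝ) B \ (F':Set ℝ), splineFun m A B d x = 0 := by
      intro x hx
      obtain ⟨hxI, hxF'⟩ := hx
      have hxF : x ∉ F := fun h => hxF' (by
        simp only [hF', Finset.coe_union, Set.mem_union, Finset.mem_coe]
        exact Or.inl h)
      have hxint : ∀ k : ℤ, x ≠ k := by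
        intro k hk
        apply hxF'
        simp only [hF', Finset.coe_union, Set.mem_union, Finset.mem_coe]
        refine Or.inr (Finset.mem_image.2 ⟨k, Finset.mem_Icc.2 ⟨?_, ?_⟩, hk.symm⟩)
        · exact_mod_cast hk ▸ hxI.1
        · exact_mod_cast hk ▸ hxI.2
      have hxA : (A:ℝ) < x := lt_of_le_of_ne hxI.1 (fun h => hxint A h.symm)
      have hxB : x < B := lt_of_le_of_ne hxI.2 (fun h => hxint B h)
      have hop : IsOpen (Set.Ioo (A:ℝ) B \ (F:Set ℝ)) :=
        isOpen_Ioo.sdiff F.finite_toSet.isClosed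
      have hmem : (Set.Ioo (A:ℝ) B \ (F:Set ℝ)) ∈ nhds x := hop.mem_nhds ⟨⟨hxA, hxB⟩, hxF⟩
      have hzero : HasDerivAt (splineFun (m+1) A B c) 0 x := by
        refine (hasDerivAt_const x (0:ℝ)).congr_of_eventuallyEq ?_
        filter_upwards [hmem] with u hu
        exact hvan u ⟨⟨hu.1.1.le, hu.1.2.le⟩, hu.2⟩
      have hD : HasDerivAt (splineFun (m+1) A B c)
          (∑ n ∈ J, c n * (bspline m (x - n) - bspline m (x - n - 1))) x := by
        have hfun : splineFun (m+1) A B c =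
            fun u => ∑ n ∈ J, c n * bspline (m+1) (u - n) := by
          funext u
          unfold splineFun
          rw [hIcc]
        rw [hfun]
        refine HasDerivAt.fun_sum (fun n _ => ?_)
        have hxn : ∀ k : ℤ, x - n ≠ k := fun k h => hxint (k + n) (by push_cast at h ⊢; linarith)
        have h1 := (bspline_hasDerivAt m hxn).comp x ((hasDerivAt_id x).sub_const (n:ℝ))
        simp only [mul_one] at h1
        simpa [Function.comp] using h1.const_mul (c n)
      have heq := hD.unique hzero
      -- algebra: rewrite the derivative sum as splineFun m A B d x
      have e1 : ∑ n ∈ J, c n * (bspline m (x - n) - bspline m (x - n - 1)) =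
          ∑ n ∈ I, c n * (bspline m (x - n) - bspline m (x - n - 1)) := by
        refine Finset.sum_subset ?_ ?_
        · exact Finset.Icc_subset_Icc le_rfl (by omega)
        · intro k hkI hkJ
          rw [hsupp' k hkJ, zero_mul]
      have e2 : ∑ n ∈ I, c n * (bspline m (x - n) - bspline m (x - n - 1)) =
          (∑ n ∈ I, c n * bspline m (x - n)) - ∑ n ∈ I, c n * bspline m (x - n - 1) := by
        rw [← Finset.sum_sub_distrib]
        exact Finset.sum_congr rfl (fun n _ => by ring)
      have e3 : ∑ n ∈ I, c n * bspline m (x - n - 1) =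
          ∑ k ∈ Finset.Icc (A - (m:ℤ)) (B+1), c (k-1) * bspline m (x - k) := by
        have hmap : (Finset.Icc (A - (m:ℤ) - 1) B).map (addRightEmbedding (1:ℤ)) =
            Finset.Icc (A - (m:ℤ)) (B+1) := by
          rw [Finset.map_add_right_Icc]
          congr 1
          ring
        rw [← hmap, Finset.sum_map]
        refine Finset.sum_congr rfl (fun n _ => ?_)
        simp only [addRightEmbedding_apply]
        have : ((n + 1 : ℤ) : ℝ) = (n : ℝ) + 1 := by push_cast; ring
        rw [add_sub_cancel_right, this]
        ring_nf
      have e4 : ∑ k ∈ Finset.Icc (A - (m:ℤ)) (B+1), c (k-1) * bspline m (x - k) =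
          ∑ k ∈ Finset.Icc (A - (m:ℤ)) (B-1), c (k-1) * bspline m (x - k) := by
        refine (Finset.sum_subset (Finset.Icc_subset_Icc le_rfl (by omega)) ?_).symm
        intro k hk1 hk2
        rw [Finset.mem_Icc] at hk1 hk2
        have hkB : (B:ℝ) ≤ k := by exact_mod_cast (by omega : B ≤ k)
        rw [bspline_zero_of_neg m (by linarith), mul_zero]
      have e5 : ∑ n ∈ I, c n * bspline m (x - n) =
          ∑ n ∈ Finset.Icc (A - (m:ℤ)) (B-1), c n * bspline m (x - n) := by
        refine (Finset.sum_subset ?_ ?_).symm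
        · rw [hI]; exact Finset.Icc_subset_Icc (by omega) (by omega)
        · intro k hk1 hk2
          rw [hI, Finset.mem_Icc] at hk1
          rw [Finset.mem_Icc] at hk2
          rcases (by omega : k = A - (m:ℤ) - 1 ∨ k = B) with h | h
          · have hk' : (k:ℝ) = (A:ℝ) - m - 1 := by rw [h]; push_cast; ring
            rw [bspline_zero_of_gt m (by rw [hk']; linarith), mul_zero]
          · rw [hsupp' k (by rw [hJ, Finset.mem_Icc]; omega), zero_mul]
      have e6 : splineFun m A B d x =
          ∑ k ∈ Finset.Icc (A - (m:ℤ)) (B-1), (c k - c (k-1)) * bspline m (x - k) := by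
        unfold splineFun
        refine Finset.sum_congr rfl (fun k hk => ?_)
        rw [hd]
        simp only [if_pos hk]
      rw [e6]
      have : ∑ k ∈ Finset.Icc (A - (m:ℤ)) (B-1), (c k - c (k-1)) * bspline m (x - k) =
          (∑ n ∈ Finset.Icc (A - (m:ℤ)) (B-1), c n * bspline m (x - n))
          - ∑ k ∈ Finset.Icc (A - (m:ℤ)) (B-1), c (k-1) * bspline m (x - k) := by
        rw [← Finset.sum_sub_distrib]
        exact Finset.sum_congr rfl (fun n _ => by ring)
      rw [this, ← e5, ← e4, ← e3, ← e2, ← e1, heq]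
    have hd0 := ih A B hAB F' d hdsupp hder
    have hcc : ∀ k ∈ Finset.Icc (A - (m:ℤ)) (B-1), c k = c (k-1) := by
      intro k hk
      have := hd0 k
      rw [hd] at this
      simp only [if_pos hk] at this
      linarith
    set t := c (A - (m:ℤ) - 1) with ht
    have hconst : ∀ j : ℕ, (A - (m:ℤ) - 1 + j) ≤ B - 1 → c (A - (m:ℤ) - 1 + j) = t := by
      intro j
      induction j with
      | zero => intro _; simp [ht]
      | succ j hj =>
        intro hle
        have h1 : (A - (m:ℤ) - 1 + (j+1:ℕ)) ∈ Finset.Icc (A - (m:ℤ)) (B-1) :=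
          Finset.mem_Icc.2 (by push_cast at hle ⊢; omega)
        rw [hcc _ h1]
        have h2 : (A - (m:ℤ) - 1 + (j+1:ℕ)) - 1 = A - (m:ℤ) - 1 + (j:ℕ) := by push_cast; ring
        rw [h2]
        exact hj (by push_cast at hle ⊢; omega)
    have hconst' : ∀ k ∈ J, c k = t := by
      intro k hk
      rw [hJ, Finset.mem_Icc] at hk
      obtain ⟨j, hj⟩ : ∃ j : ℕ, k = A - (m:ℤ) - 1 + j :=
        ⟨(k - (A - (m:ℤ) - 1)).toNat, by omega⟩
      subst hj
      exact hconst j (by omega)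
    -- final: t = 0
    obtain ⟨y, hy, hyF⟩ := exists_pt (show (A:ℝ) < (A:ℝ) + 1 by linarith) F
    have hyI : y ∈ Set.Icc (A:ℝ) B \ (F:Set ℝ) := by
      refine ⟨⟨hy.1.le, ?_⟩, hyF⟩
      have : (A:ℝ) + 1 ≤ B := by exact_mod_cast (by omega : A + 1 ≤ B)
      linarith [hy.2]
    have h0 := hvan y hyI
    unfold splineFun at h0
    rw [hIcc] at h0
    rw [Finset.sum_congr rfl (fun n hn => by rw [hconst' n hn])] at h0
    rw [← Finset.mul_sum] at h0
    have hS : 0 < ∑ n ∈ J, bspline (m+1) (y - n) := by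
      have hA : A ∈ J := by rw [hJ, Finset.mem_Icc]; omega
      refine lt_of_lt_of_le ?_
        (Finset.single_le_sum (f := fun n : ℤ => bspline (m+1) (y - n))
          (fun i _ => bspline_nonneg _ _) hA)
      show (0:ℝ) < bspline (m+1) (y - (A:ℝ))
      rw [bspline_eq_pow (m+1) (Set.mem_Icc.2 ⟨by linarith [hy.1], by linarith [hy.2]⟩)]
      have h1 : (0:ℝ) < y - A := by linarith [hy.1]
      positivity
    have ht0 : t = 0 := by
      rcases mul_eq_zero.1 h0 with h | h
      · exact h
      · exact absurd h (ne_of_gt hS)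
    intro n
    by_cases hn : n ∈ J
    · rw [hconst' n hn, ht0]
    · exact hsupp' n hn

lemma spline_indep (m : ℕ) (A B : ℤ) (hAB : A < B) (c : ℤ → ℝ)
    (hvan : ∀ x ∈ Set.Icc (A:ℝ) B, splineFun m A B c x = 0) :
    ∀ n ∈ Finset.Icc (A - (m:ℤ)) (B-1), c n = 0 := by
  classical
  set c₀ : ℤ → ℝ := fun k => if k ∈ Finset.Icc (A - (m:ℤ)) (B-1) then c k else 0 with hc₀
  have hsp : splineFun m A B c₀ = splineFun m A B c := by
    funext x
    unfold splineFun
    exact Finset.sum_congr rfl fun k hk => by simp only [hc₀]; rw [if_pos hk]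
  have h := spline_indep_aux m A B hAB ∅ c₀ (fun k hk => if_neg hk)
    (fun x hx => by rw [hsp]; exact hvan x hx.1)
  intro n hn
  have h2 := h n
  simp only [hc₀] at h2
  rwa [if_pos hn] at h2

lemma exists_avoid {V : Type*} [AddCommGroup V] [Module ℝ V] (S : Finset (Submodule ℝ V))
    (hS : ∀ W ∈ S, W ≠ ⊤) : ∃ v, ∀ W ∈ S, v ∉ W := by
  by_contra h
  push_neg at h
  have hcov : ⋃ p ∈ S, (p : Set V) = Set.univ := by
    ext v
    simp only [Set.mem_iUnion, Set.mem_univ, iff_true]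
    obtain ⟨W, hW, hv⟩ := h v
    exact ⟨W, hW, hv⟩
  exact hS _ (Subspace.top_mem_of_biUnion_eq_univ hcov) rfl

variable (m : ℕ) (N₁ N₂ : ℤ) in
abbrev Idx := {n // n ∈ Finset.Icc (N₁ - (m:ℤ)) (N₂ - 1)}

noncomputable def extFun (m : ℕ) (N₁ N₂ : ℤ) (v : Idx m N₁ N₂ → ℝ) : ℤ → ℝ :=
  fun k => if h : k ∈ Finset.Icc (N₁ - (m:ℤ)) (N₂ - 1) then v ⟨k, h⟩ else 0

lemma restrict_ext (m : ℕ) (N₁ N₂ : ℤ) (v : Idx m N₁ N₂ → ℝ) :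
    (fun n : Idx m N₁ N₂ => extFun m N₁ N₂ v n) = v :=
  funext fun n => dif_pos n.2

lemma splineFun_ext (m : ℕ) (N₁ N₂ : ℤ) (v : Idx m N₁ N₂ → ℝ) (x : ℝ) :
    splineFun m N₁ N₂ (extFun m N₁ N₂ v) x
      = ∑ n : Idx m N₁ N₂, v n * bspline m (x - ((n:ℤ):ℝ)) := by
  unfold splineFun
  rw [← Finset.sum_attach (Finset.Icc (N₁ - (m:ℤ)) (N₂-1))
    (fun k => extFun m N₁ N₂ v k * bspline m (x - k))]
  exact Finset.sum_congr rfl fun n _ => by rw [extFun, dif_pos n.2]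

noncomputable def Tmap (m : ℕ) (N₁ N₂ : ℤ) (E : Finset ℝ) :
    (Idx m N₁ N₂ → ℝ) →ₗ[ℝ] ({x // x ∈ E} → ℝ) where
  toFun v := fun x => ∑ n : Idx m N₁ N₂, v n * bspline m ((x:ℝ) - ((n:ℤ):ℝ))
  map_add' u v := by
    funext x
    simp [add_mul, Finset.sum_add_distrib]
  map_smul' a v := by
    funext x
    simp [Finset.mul_sum, mul_assoc]


/-- an almost phaseless sampling set has at least `N₂ - N₁ + m + 1` points. -/
theorem stmt_11 (m : ℕ) (hm : 1 ≤ m) (N₁ N₂ : ℤ) (hN : N₁ < N₂) (E : Finset ℝ)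
    (hE : (E : Set ℝ) ⊆ Set.Icc (N₁ : ℝ) N₂)
    (hAPS : IsAlmostPhaselessSamplingSet m N₁ N₂ E) :
    N₂ - N₁ + m + 1 ≤ (E.card : ℤ) := by
  classical
  by_contra hlt
  push_neg at hlt
  have hcard_le : (E.card : ℤ) ≤ N₂ - N₁ + m := by omega
  obtain ⟨S, hS1, hS2⟩ := hAPS
  have hcardι : Fintype.card (Idx m N₁ N₂) = (N₂ - N₁ + m).toNat := by
    rw [Fintype.card_coe, Int.card_Icc]
    congr 1
    omega
  set T := Tmap m N₁ N₂ E with hT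
  have hres : ∀ c : ℤ → ℝ, (∀ x ∈ Set.Icc (N₁:ℝ) N₂, splineFun m N₁ N₂ c x = 0) →
      ∀ n ∈ Finset.Icc (N₁ - (m:ℤ)) (N₂-1), c n = 0 := spline_indep m N₁ N₂ hN
  by_cases hinj : Function.Injective T
  · -- injective case
    have hfr := LinearMap.finrank_le_finrank_of_injective hinj
    rw [Module.finrank_fintype_fun_eq_card, Module.finrank_fintype_fun_eq_card, hcardι,
      Fintype.card_coe] at hfr
    have hEcard : E.card = (N₂ - N₁ + m).toNat := by omega
    have hsurj : Function.Surjective T := by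
      rw [← LinearMap.range_eq_top]
      apply Submodule.eq_top_of_finrank_eq
      rw [LinearMap.finrank_range_of_inj hinj, Module.finrank_fintype_fun_eq_card,
        Module.finrank_fintype_fun_eq_card, hcardι, Fintype.card_coe, hEcard]
    have hE2 : 1 < Fintype.card {x // x ∈ E} := by
      rw [Fintype.card_coe]
      omega
    obtain ⟨x₀, x₁, hx01⟩ := Fintype.exists_pair_of_one_lt_card hE2
    set W : {x // x ∈ E} → Submodule ℝ (Idx m N₁ N₂ → ℝ) := fun x =>
      LinearMap.ker ((LinearMap.proj x : ({x // x ∈ E} → ℝ) →ₗ[ℝ] ℝ).comp T) with hW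
    have hWmem : ∀ v (x : {x // x ∈ E}), v ∈ W x ↔ T v x = 0 := by
      intro v x
      simp [hW, LinearMap.mem_ker]
    have hWne : ∀ x, W x ≠ ⊤ := by
      intro x h
      obtain ⟨v, hv⟩ := hsurj (Pi.single x 1)
      have h1 : T v x = 0 := (hWmem v x).1 (h ▸ Submodule.mem_top)
      rw [hv] at h1
      simp at h1
    set S' := S ∪ Finset.image W Finset.univ with hS'
    have hS'ne : ∀ Wx ∈ S', Wx ≠ ⊤ := by
      intro Wx hWx
      rcases Finset.mem_union.1 hWx with h | h
      · exact hS1 Wx h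
      · obtain ⟨x, _, rfl⟩ := Finset.mem_image.1 h
        exact hWne x
    obtain ⟨v₀, hv₀⟩ := exists_avoid S' hS'ne
    set bvec : {x // x ∈ E} → ℝ := fun x => if x = x₀ then -(T v₀ x) else T v₀ x with hbvec
    obtain ⟨wv, hwv⟩ := hsurj bvec
    have hTc : ∀ (v : Idx m N₁ N₂ → ℝ) (x : {x // x ∈ E}),
        splineFun m N₁ N₂ (extFun m N₁ N₂ v) ↑x = T v x := by
      intro v x
      exact (splineFun_ext m N₁ N₂ v ↑x).trans rfl
    have hmem : ∀ W' ∈ S, (fun n : Idx m N₁ N₂ => extFun m N₁ N₂ v₀ n) ∉ W' := by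
      intro W' hW'
      rw [restrict_ext]
      exact hv₀ W' (Finset.mem_union_left _ hW')
    have hsamp : ∀ x ∈ E, |splineFun m N₁ N₂ (extFun m N₁ N₂ v₀) x|
        = |splineFun m N₁ N₂ (extFun m N₁ N₂ wv) x| := by
      intro x hx
      rw [show x = ((⟨x, hx⟩ : {x // x ∈ E}):ℝ) from rfl, hTc v₀ ⟨x, hx⟩, hTc wv ⟨x, hx⟩, hwv]
      by_cases hxx : (⟨x, hx⟩ : {x // x ∈ E}) = x₀
      · rw [hbvec]
        simp only [if_pos hxx]
        rw [abs_neg]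
      · rw [hbvec]
        simp only [if_neg hxx]
    rcases hS2 (extFun m N₁ N₂ v₀) hmem (extFun m N₁ N₂ wv) hsamp with h | h
    · have h1 := h ↑x₀ (hE x₀.2)
      rw [hTc v₀ x₀, hTc wv x₀, hwv] at h1
      rw [hbvec] at h1
      simp only [if_pos rfl] at h1
      have hT0 : T v₀ x₀ = 0 := by
        simp at h1
        linarith [h1]
      exact hv₀ _ (Finset.mem_union_right _ (Finset.mem_image.2 ⟨x₀, Finset.mem_univ _, rfl⟩))
        ((hWmem v₀ x₀).2 hT0)
    · have h1 := h ↑x₁ (hE x₁.2)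
      rw [hTc v₀ x₁, hTc wv x₁, hwv] at h1
      rw [hbvec] at h1
      simp only [if_neg (Ne.symm hx01)] at h1
      have hT0 : T v₀ x₁ = 0 := by linarith
      exact hv₀ _ (Finset.mem_union_right _ (Finset.mem_image.2 ⟨x₁, Finset.mem_univ _, rfl⟩))
        ((hWmem v₀ x₁).2 hT0)
  · -- non-injective case
    rw [Function.not_injective_iff] at hinj
    obtain ⟨a, b, hab, hne⟩ := hinj
    set d := a - b with hd
    have hd0 : d ≠ 0 := sub_ne_zero.2 hne
    have hTd : T d = 0 := by rw [hd, map_sub, hab, sub_self]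
    have hspan : Submodule.span ℝ {d} ≠ ⊤ := by
      intro h
      have h1 : Module.finrank ℝ (Submodule.span ℝ {d}) = 1 := finrank_span_singleton hd0
      rw [h, finrank_top, Module.finrank_fintype_fun_eq_card, hcardι] at h1
      omega
    set S' : Finset (Submodule ℝ (Idx m N₁ N₂ → ℝ)) := insert (Submodule.span ℝ {d}) S with hS'
    have hS'ne : ∀ W ∈ S', W ≠ ⊤ := by
      intro W hW
      rcases Finset.mem_insert.1 hW with rfl | hW
      · exact hspan
      · exact hS1 W hW
    obtain ⟨v₀, hv₀⟩ := exists_avoid S' hS'ne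
    have hmem : ∀ W ∈ S, (fun n : Idx m N₁ N₂ => extFun m N₁ N₂ v₀ n) ∉ W := by
      intro W hW
      rw [restrict_ext]
      exact hv₀ W (Finset.mem_insert_of_mem hW)
    have hexp : ∀ x : ℝ, splineFun m N₁ N₂ (extFun m N₁ N₂ (v₀ + d)) x
        = splineFun m N₁ N₂ (extFun m N₁ N₂ v₀) x
          + ∑ n : Idx m N₁ N₂, d n * bspline m (x - ((n:ℤ):ℝ)) := by
      intro x
      rw [splineFun_ext, splineFun_ext, ← Finset.sum_add_distrib]
      exact Finset.sum_congr rfl fun n _ => by simp [add_mul]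
    have hsamp : ∀ x ∈ E, |splineFun m N₁ N₂ (extFun m N₁ N₂ v₀) x|
        = |splineFun m N₁ N₂ (extFun m N₁ N₂ (v₀ + d)) x| := by
      intro x hx
      rw [hexp]
      have : ∑ n : Idx m N₁ N₂, d n * bspline m (x - ((n:ℤ):ℝ)) = T d ⟨x, hx⟩ := rfl
      rw [this, hTd]
      simp
    rcases hS2 (extFun m N₁ N₂ v₀) hmem (extFun m N₁ N₂ (v₀ + d)) hsamp with h | h
    · have hvan : ∀ x ∈ Set.Icc (N₁:ℝ) N₂, splineFun m N₁ N₂ (extFun m N₁ N₂ d) x = 0 := by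
        intro x hx
        have h2 := h x hx
        rw [hexp] at h2
        rw [splineFun_ext]
        linarith
      have hz := hres (extFun m N₁ N₂ d) hvan
      apply hd0
      funext n
      have h3 := hz n n.2
      rw [extFun, dif_pos n.2] at h3
      simpa using h3
    · set w : Idx m N₁ N₂ → ℝ := (2:ℝ) • v₀ + d with hw
      have hvan : ∀ x ∈ Set.Icc (N₁:ℝ) N₂, splineFun m N₁ N₂ (extFun m N₁ N₂ w) x = 0 := by
        intro x hx
        have h2 := h x hx
        rw [hexp] at h2
        rw [splineFun_ext]
        have e1 : ∑ n : Idx m N₁ N₂, w n * bspline m (x - ((n:ℤ):ℝ))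
            = 2 * (∑ n : Idx m N₁ N₂, v₀ n * bspline m (x - ((n:ℤ):ℝ)))
              + ∑ n : Idx m N₁ N₂, d n * bspline m (x - ((n:ℤ):ℝ)) := by
          rw [Finset.mul_sum, ← Finset.sum_add_distrib]
          refine Finset.sum_congr rfl fun n _ => ?_
          rw [hw]
          simp only [Pi.add_apply, Pi.smul_apply, smul_eq_mul]
          ring
        rw [e1]
        rw [splineFun_ext m N₁ N₂ v₀ x] at h2
        linarith
      have hz := hres (extFun m N₁ N₂ w) hvan
      have hv₀span : v₀ ∈ Submodule.span ℝ {d} := by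
        rw [Submodule.mem_span_singleton]
        refine ⟨-(1/2 : ℝ), ?_⟩
        funext n
        have h3 := hz n n.2
        rw [extFun, dif_pos n.2] at h3
        simp only [Subtype.coe_eta, hw, Pi.add_apply, Pi.smul_apply, smul_eq_mul] at h3
        simp only [Pi.smul_apply, smul_eq_mul]
        linarith
      exact hv₀ _ (Finset.mem_insert_self _ _) hv₀span
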